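/- Let u be a unit timelike vector field with ∇_j u_k = φ(u_j u_k + g_{jk}) + σ_{jk} (σ symmetric, trace-free, σ u = 0, u vorticity- and acceleration-free), and suppose Ric(u) = ξ u. Using the identity R_{jk}u^j = ∇²u_k − ∇_k ∇^j u_j and assuming ∇^l σ_{kl} = u_k σ_{rs}σ^{rs}, one obtains ξ = (n−1)(φ² + φ̇) + σ_{kl}σ^{kl} and ∇_k φ = −φ̇ u_k (where φ̇ = u^k∇_k φ). -/

import Mathlib

open Finset in
/-- Abstract-index formulation with an abstract covariant derivative `D`
(additive, Leibniz, metric-compatible).  Let `u` be unit timelike, geodesic and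
irrotational with kinematical decomposition
`∇_j u_k = φ(u_j u_k + g_{jk}) + σ_{jk}` and `Ric(u) = ξ u`.  Using the Ricci
identity `R_{jk} u^j = ∇²u_k - ∇_k ∇^j u_j` and assuming
`∇^l σ_{kl} = (σ_{rs} σ^{rs}) u_k`, one obtains
`ξ = (n-1)(φ² + φ̇) + σ_{kl}σ^{kl}` and `∇_k φ = -φ̇ u_k`. -/
theorem xi_and_gradphi {M : Type*} (n : ℕ) (hn : 3 ≤ n)
    (D : (M → ℝ) → Fin n → M → ℝ)
    (hadd : ∀ (f h : M → ℝ) i, D (f + h) i = D f i + D h i)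
    (hleib : ∀ (f h : M → ℝ) i x,
      D (fun y => f y * h y) i x = f x * D h i x + h x * D f i x)
    (g ginv : M → Fin n → Fin n → ℝ)
    (hginv : ∀ x j k, ∑ m, ginv x j m * g x m k = if j = k then 1 else 0)
    (hgsymm : ∀ x j k, g x j k = g x k j)
    (hginvsymm : ∀ x j k, ginv x j k = ginv x k j)
    (hDg : ∀ k l i, D (fun y => g y k l) i = 0)
    (hDginv : ∀ k l i, D (fun y => ginv y k l) i = 0)
    (u : M → Fin n → ℝ)
    (hunit : ∀ x, ∑ j, ∑ k, ginv x j k * u x j * u x k = -1)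
    (φ : M → ℝ) (σ : M → Fin n → Fin n → ℝ)
    (hσsymm : ∀ x j k, σ x j k = σ x k j)
    (hσtf : ∀ x, ∑ j, ∑ k, ginv x j k * σ x j k = 0)
    (hσu : ∀ x j, ∑ k, ∑ l, ginv x k l * u x l * σ x j k = 0)
    (Du : M → Fin n → Fin n → ℝ)
    (hDu : ∀ j k x, D (fun y => u y k) j x = Du x j k)
    (hdecomp : ∀ x j k, Du x j k = φ x * (u x j * u x k + g x j k) + σ x j k)
    (σσ : M → ℝ)
    (hσσ : ∀ x, σσ x = ∑ k, ∑ l, ∑ r, ∑ s,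
      ginv x k r * ginv x l s * σ x k l * σ x r s)
    -- divergence of the shear: ∇^l σ_{kl} = (σ_{rs}σ^{rs}) u_k
    (hdivσ : ∀ x k, ∑ l, ∑ m, ginv x l m * D (fun y => σ y m k) l x = σσ x * u x k)
    (ξ : M → ℝ)
    -- Ricci identity R_{jk} u^j = ∇²u_k - ∇_k ∇^j u_j with R_{jk} u^j = ξ u_k:
    (hRicId : ∀ x k, ξ x * u x k =
      (∑ l, ∑ m, ginv x l m * D (fun y => Du y m k) l x)
      - D (fun y => ∑ j, ∑ i, ginv y j i * Du y j i) k x)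
    (φdot : M → ℝ)
    (hφdot : ∀ x, φdot x = ∑ j, ∑ i, ginv x j i * u x i * D φ j x) :
    (∀ x, ξ x = ((n : ℝ) - 1) * ((φ x) ^ 2 + φdot x) + σσ x) ∧
    (∀ x k, D φ k x = -(φdot x) * u x k) := by
  -- basic derivative facts
  have hD0val : ∀ (i : Fin n) (x : M), D 0 i x = 0 := by
    intro i x
    have h := congrFun (hadd 0 0 i) x
    rw [add_zero] at h
    simp only [Pi.add_apply] at h
    linarith
  have hDsum1 : ∀ (F : Fin n → M → ℝ) (s : Finset (Fin n)) (i : Fin n) (x : M),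
      D (fun y => ∑ j ∈ s, F j y) i x = ∑ j ∈ s, D (F j) i x := by
    intro F s i x
    induction s using Finset.induction_on with
    | empty => simp only [Finset.sum_empty]; exact hD0val i x
    | insert a s ha ih =>
      have hfun : (fun y => ∑ j ∈ insert a s, F j y)
          = (F a + fun y => ∑ j ∈ s, F j y) := by
        funext y; rw [Finset.sum_insert ha]; rfl
      rw [hfun, hadd, Pi.add_apply, ih, Finset.sum_insert ha]
  -- symmetry of Du
  have hDusymm : ∀ x a b, Du x a b = Du x b a := by
    intro x a b
    rw [hdecomp, hdecomp, hgsymm x a b, hσsymm x a b]; ring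
  -- trace of the metric
  have trg : ∀ x, ∑ j, ∑ i, ginv x j i * g x j i = (n : ℝ) := by
    intro x
    have h1 : ∀ j : Fin n, ∑ i, ginv x j i * g x j i = 1 := by
      intro j
      have h := hginv x j j
      simp only [if_pos rfl] at h
      calc ∑ i, ginv x j i * g x j i = ∑ i, ginv x j i * g x i j :=
            Finset.sum_congr rfl fun i _ => by rw [hgsymm x j i]
        _ = 1 := h
    simp [h1]
  -- trace of Du
  have trDu : ∀ x, ∑ j, ∑ i, ginv x j i * Du x j i = ((n : ℝ) - 1) * φ x := by
    intro x
    have e : ∀ j i : Fin n, ginv x j i * Du x j i =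
        φ x * (ginv x j i * u x j * u x i) + φ x * (ginv x j i * g x j i)
          + ginv x j i * σ x j i := by
      intro j i; rw [hdecomp]; ring
    calc ∑ j, ∑ i, ginv x j i * Du x j i
        = ∑ j, ∑ i, (φ x * (ginv x j i * u x j * u x i)
            + φ x * (ginv x j i * g x j i) + ginv x j i * σ x j i) :=
          Finset.sum_congr rfl fun j _ => Finset.sum_congr rfl fun i _ => e j i
      _ = ((n : ℝ) - 1) * φ x := by
          simp only [Finset.sum_add_distrib, ← Finset.mul_sum]
          rw [hunit x, trg x, hσtf x]; ring
  -- u contracted with g gives back u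
  have hug : ∀ x k, ∑ l, ∑ m, ginv x l m * u x m * g x l k = u x k := by
    intro x k
    rw [Finset.sum_comm]
    calc ∑ m, ∑ l, ginv x l m * u x m * g x l k
        = ∑ m, u x m * ∑ l, ginv x m l * g x l k := by
          refine Finset.sum_congr rfl fun m _ => ?_
          rw [Finset.mul_sum]
          refine Finset.sum_congr rfl fun l _ => ?_
          rw [hginvsymm x l m]; ring
      _ = ∑ m, u x m * (if m = k then (1:ℝ) else 0) :=
          Finset.sum_congr rfl fun m _ => by rw [hginv]
      _ = u x k := by simp
  -- Kronecker contraction with D φ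
  have hδφ : ∀ x k, ∑ l, ∑ m, ginv x l m * g x m k * D φ l x = D φ k x := by
    intro x k
    calc ∑ l, ∑ m, ginv x l m * g x m k * D φ l x
        = ∑ l, (∑ m, ginv x l m * g x m k) * D φ l x := by
          refine Finset.sum_congr rfl fun l _ => ?_
          rw [Finset.sum_mul]
      _ = ∑ l, (if l = k then (1:ℝ) else 0) * D φ l x :=
          Finset.sum_congr rfl fun l _ => by rw [hginv]
      _ = D φ k x := by simp
  -- geodesic contraction: u^l Du_{l k} = 0
  have hugeo : ∀ x k, ∑ l, ∑ m, ginv x l m * u x m * Du x l k = 0 := by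
    intro x k
    have e : ∀ l m : Fin n, ginv x l m * u x m * Du x l k =
        (φ x * u x k) * (ginv x l m * u x l * u x m)
          + φ x * (ginv x l m * u x m * g x l k)
          + ginv x l m * u x m * σ x k l := by
      intro l m; rw [hdecomp, hσsymm x l k]; ring
    calc ∑ l, ∑ m, ginv x l m * u x m * Du x l k
        = ∑ l, ∑ m, ((φ x * u x k) * (ginv x l m * u x l * u x m)
            + φ x * (ginv x l m * u x m * g x l k)
            + ginv x l m * u x m * σ x k l) :=
          Finset.sum_congr rfl fun l _ => Finset.sum_congr rfl fun m _ => e l m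
      _ = 0 := by
          simp only [Finset.sum_add_distrib, ← Finset.mul_sum]
          rw [hunit x, hug x k, hσu x k]; ring
  -- u contracted with the second Du slot
  have hDuUa : ∀ x k, ∑ j, ∑ i, ginv x j i * u x j * Du x k i = 0 := by
    intro x k
    rw [Finset.sum_comm]
    calc ∑ i, ∑ j, ginv x j i * u x j * Du x k i
        = ∑ i, ∑ j, ginv x i j * u x j * Du x i k := by
          refine Finset.sum_congr rfl fun i _ => Finset.sum_congr rfl fun j _ => ?_
          rw [hginvsymm x j i, hDusymm x k i]
      _ = 0 := hugeo x k
  -- derivative of Du, expanded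
  have hDDu : ∀ x l m k, D (fun y => Du y m k) l x =
      φ x * (u x m * Du x l k) + φ x * (u x k * Du x l m)
        + u x m * u x k * D φ l x + g x m k * D φ l x
        + D (fun y => σ y m k) l x := by
    intro x l m k
    have hfun : (fun y => Du y m k)
        = ((fun y => φ y * (u y m * u y k))
            + ((fun y => φ y * g y m k) + (fun y => σ y m k))) := by
      funext y; simp only [Pi.add_apply]; rw [hdecomp]; ring
    rw [hfun, hadd, hadd]
    simp only [Pi.add_apply]
    simp only [hleib, hDu, hDg, Pi.zero_apply, mul_zero, zero_mul, add_zero, zero_add]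
    ring
  -- trace of Dσ vanishes
  have hTrDσ : ∀ x k, ∑ j, ∑ i, ginv x j i * D (fun y => σ y j i) k x = 0 := by
    intro x k
    have h0 : (fun y => ∑ j, ∑ i, ginv y j i * σ y j i) = (fun _ : M => (0:ℝ)) :=
      funext fun y => hσtf y
    have h1 : D (fun y => ∑ j, ∑ i, ginv y j i * σ y j i) k x = 0 := by
      rw [h0]; exact hD0val k x
    simp only [hDsum1, hleib, hDginv, Pi.zero_apply, mul_zero, add_zero] at h1
    exact h1
  -- first term of the Ricci identity
  have T1val : ∀ x k, ∑ l, ∑ m, ginv x l m * D (fun y => Du y m k) l x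
      = u x k * (φdot x + ((n:ℝ) - 1) * φ x ^ 2 + σσ x) + D φ k x := by
    intro x k
    have e : ∀ l m : Fin n, ginv x l m * D (fun y => Du y m k) l x =
        φ x * (ginv x l m * u x m * Du x l k)
          + (φ x * u x k) * (ginv x l m * Du x l m)
          + u x k * (ginv x l m * u x m * D φ l x)
          + ginv x l m * g x m k * D φ l x
          + ginv x l m * D (fun y => σ y m k) l x := by
      intro l m; rw [hDDu x l m k]; ring
    calc ∑ l, ∑ m, ginv x l m * D (fun y => Du y m k) l x
        = ∑ l, ∑ m, (φ x * (ginv x l m * u x m * Du x l k)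
            + (φ x * u x k) * (ginv x l m * Du x l m)
            + u x k * (ginv x l m * u x m * D φ l x)
            + ginv x l m * g x m k * D φ l x
            + ginv x l m * D (fun y => σ y m k) l x) :=
          Finset.sum_congr rfl fun l _ => Finset.sum_congr rfl fun m _ => e l m
      _ = u x k * (φdot x + ((n:ℝ) - 1) * φ x ^ 2 + σσ x) + D φ k x := by
          simp only [Finset.sum_add_distrib, ← Finset.mul_sum]
          rw [hugeo x k, trDu x, ← hφdot x, hδφ x k, hdivσ x k]; ring
  -- second term of the Ricci identity
  have T2val : ∀ x k, D (fun y => ∑ j, ∑ i, ginv y j i * Du y j i) k x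
      = ((n:ℝ) - 1) * D φ k x := by
    intro x k
    have h1 : D (fun y => ∑ j, ∑ i, ginv y j i * Du y j i) k x
        = ∑ j, ∑ i, ginv x j i * D (fun y => Du y j i) k x := by
      simp only [hDsum1, hleib, hDginv, Pi.zero_apply, mul_zero, add_zero]
    rw [h1]
    have e2 : ∀ j i : Fin n, ginv x j i * D (fun y => Du y j i) k x =
        φ x * (ginv x j i * u x j * Du x k i)
          + φ x * (ginv x j i * u x i * Du x j k)
          + D φ k x * (ginv x j i * u x j * u x i)
          + D φ k x * (ginv x j i * g x j i)
          + ginv x j i * D (fun y => σ y j i) k x := by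
      intro j i; rw [hDDu x k j i, hDusymm x k j]; ring
    calc ∑ j, ∑ i, ginv x j i * D (fun y => Du y j i) k x
        = ∑ j, ∑ i, (φ x * (ginv x j i * u x j * Du x k i)
            + φ x * (ginv x j i * u x i * Du x j k)
            + D φ k x * (ginv x j i * u x j * u x i)
            + D φ k x * (ginv x j i * g x j i)
            + ginv x j i * D (fun y => σ y j i) k x) :=
          Finset.sum_congr rfl fun j _ => Finset.sum_congr rfl fun i _ => e2 j i
      _ = ((n:ℝ) - 1) * D φ k x := by
          simp only [Finset.sum_add_distrib, ← Finset.mul_sum]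
          rw [hDuUa x k, hugeo x k, hunit x, trg x, hTrDσ x k]; ring
  -- key pointwise identity
  have key : ∀ x k, ((n:ℝ) - 2) * D φ k x
      = (φdot x + ((n:ℝ) - 1) * φ x ^ 2 + σσ x - ξ x) * u x k := by
    intro x k
    have h := hRicId x k
    rw [T1val x k, T2val x k] at h
    linear_combination h
  -- contract key with u
  have φdoteq : ∀ x, ((n:ℝ) - 2) * φdot x
      = -(φdot x + ((n:ℝ) - 1) * φ x ^ 2 + σσ x - ξ x) := by
    intro x
    have h : ∑ k, ∑ a, ginv x k a * u x a * (((n:ℝ) - 2) * D φ k x)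
        = ∑ k, ∑ a, ginv x k a * u x a
            * ((φdot x + ((n:ℝ) - 1) * φ x ^ 2 + σσ x - ξ x) * u x k) :=
      Finset.sum_congr rfl fun k _ => Finset.sum_congr rfl fun a _ => by rw [key x k]
    have hL : ∑ k, ∑ a, ginv x k a * u x a * (((n:ℝ) - 2) * D φ k x)
        = ((n:ℝ) - 2) * φdot x := by
      rw [hφdot x, Finset.mul_sum]
      refine Finset.sum_congr rfl fun k _ => ?_
      rw [Finset.mul_sum]
      exact Finset.sum_congr rfl fun a _ => by ring
    have hR : ∑ k, ∑ a, ginv x k a * u x a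
          * ((φdot x + ((n:ℝ) - 1) * φ x ^ 2 + σσ x - ξ x) * u x k)
        = (φdot x + ((n:ℝ) - 1) * φ x ^ 2 + σσ x - ξ x) * (-1) := by
      rw [← hunit x, Finset.mul_sum]
      refine Finset.sum_congr rfl fun k _ => ?_
      rw [Finset.mul_sum]
      exact Finset.sum_congr rfl fun a _ => by ring
    rw [hL, hR] at h
    linarith
  have hn3 : (3:ℝ) ≤ (n:ℝ) := by exact_mod_cast hn
  constructor
  · intro x
    have h := φdoteq x
    nlinarith [h]
  · intro x k
    have h := key x k
    have hC : φdot x + ((n:ℝ) - 1) * φ x ^ 2 + σσ x - ξ x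
        = -(((n:ℝ) - 2) * φdot x) := by
      have := φdoteq x; linarith
    rw [hC] at h
    have hne : ((n:ℝ) - 2) ≠ 0 := by linarith
    apply mul_left_cancel₀ hne
    rw [h]; ring
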